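/- Let N ≥ 5 and let j, k be integers with 1 < j − 1, j − 1 < k − 2, k − 2 < N − 1, and j − 1 = min{ j − 1, k − j, N + 1 − k }. Then K(B_1, B_j, B_k) = 0. -/

import Mathlib

noncomputable section

/-- The field `F = ℝ(B_1, …, B_N)` of rational functions in `N` variables
indexed by `ZMod N` (indices read modulo `N`). -/
abbrev RatF (N : ℕ) : Type := FractionRing (MvPolynomial (ZMod N) ℝ)

/-- The generator `B_i` of `ℝ(B_1, …, B_N)`. -/
noncomputable def Bgen (N : ℕ) (i : ZMod N) : RatF N :=
  algebraMap (MvPolynomial (ZMod N) ℝ) (RatF N) (MvPolynomial.X i)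

lemma Bgen_ne_zero (N : ℕ) (i : ZMod N) : Bgen N i ≠ 0 := by
  intro h
  have := IsFractionRing.injective (MvPolynomial (ZMod N) ℝ) (RatF N)
    (h.trans (map_zero (algebraMap (MvPolynomial (ZMod N) ℝ) (RatF N))).symm)
  exact MvPolynomial.X_ne_zero i this

lemma zmod_int_ne (N : ℕ) (a b : ℤ)
    (h : (0 < a - b ∧ a - b < N) ∨ (0 < b - a ∧ b - a < N)) :
    (a : ZMod N) ≠ (b : ZMod N) := by
  intro hEq
  have h0 : ((a - b : ℤ) : ZMod N) = 0 := by push_cast; rw [hEq]; ring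
  rw [ZMod.intCast_zmod_eq_zero_iff_dvd] at h0
  rcases h with ⟨h1, h2⟩ | ⟨h1, h2⟩
  · have := Int.le_of_dvd h1 h0
    omega
  · have := Int.le_of_dvd (by omega : (0:ℤ) < -(a-b)) (dvd_neg.mpr h0)
    omega


lemma zmod_ne_of_int (N : ℕ) (a b : ℤ) (u v : ZMod N)
    (hu : (a : ZMod N) = u) (hv : (b : ZMod N) = v)
    (h : (0 < a - b ∧ a - b < N) ∨ (0 < b - a ∧ b - a < N)) : u ≠ v := by
  rw [← hu, ← hv]; exact zmod_int_ne N a b h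

/-- If `1 < j − 1 < k − 2 < N − 1` and `j − 1` realizes the minimal cyclic gap
`min {j − 1, k − j, N + 1 − k}`, then the mixed Jacobiator
`K(B_1, B_j, B_k)` vanishes. -/
theorem mixed_jacobiator_vanishes_generic_case (N : ℕ) (hN : 5 ≤ N)
    (bC bS : RatF N → RatF N → RatF N)
    -- `{·,·}_{C2N}` is ℝ-bilinear, antisymmetric, and a derivation in each argument
    (hC_add : ∀ x y z : RatF N, bC (x + y) z = bC x z + bC y z)
    (hC_smul : ∀ (c : ℝ) (x y : RatF N), bC (c • x) y = c • bC x y)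
    (hC_anti : ∀ x y : RatF N, bC x y = - bC y x)
    (hC_leib : ∀ x y z : RatF N, bC (x * y) z = x * bC y z + y * bC x z)
    -- values of `{·,·}_{C2N}` on the generators
    (hC_gen1 : ∀ k : ZMod N,
      bC (Bgen N k) (Bgen N (k + 1)) =
        Bgen N k * Bgen N (k + 1) - Bgen N k - Bgen N (k + 1))
    (hC_gen2 : ∀ k : ZMod N,
      bC (Bgen N k) (Bgen N (k + 2)) =
        - (Bgen N k * Bgen N (k + 2)) / Bgen N (k + 1))
    (hC_gen0 : ∀ i j : ZMod N,
      j - i ≠ 1 → j - i ≠ -1 → j - i ≠ 2 → j - i ≠ -2 → bC (Bgen N i) (Bgen N j) = 0)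
    -- `{·,·}_{S2}` is ℝ-bilinear, antisymmetric, and a derivation in each argument
    (hS_add : ∀ x y z : RatF N, bS (x + y) z = bS x z + bS y z)
    (hS_smul : ∀ (c : ℝ) (x y : RatF N), bS (c • x) y = c • bS x y)
    (hS_anti : ∀ x y : RatF N, bS x y = - bS y x)
    (hS_leib : ∀ x y z : RatF N, bS (x * y) z = x * bS y z + y * bS x z)
    -- values of `{·,·}_{S2}` on the generators
    (hS_gen : ∀ i j : ZMod N,
      bS (Bgen N i) (Bgen N j) =
        ((if i + 1 = j then (1 : ℝ) else 0) - (if i - 1 = j then (1 : ℝ) else 0)) •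
          (Bgen N i * Bgen N j))
    (j k : ℤ)
    (hj : 1 < j - 1) (hjk : j - 1 < k - 2) (hk : k - 2 < (N : ℤ) - 1)
    (hmin : j - 1 = min (j - 1) (min (k - j) ((N : ℤ) + 1 - k))) :
      bS (bC (Bgen N 1) (Bgen N ((j : ZMod N)))) (Bgen N ((k : ZMod N))) +
      bS (bC (Bgen N ((j : ZMod N))) (Bgen N ((k : ZMod N)))) (Bgen N 1) +
      bS (bC (Bgen N ((k : ZMod N))) (Bgen N 1)) (Bgen N ((j : ZMod N))) +
      bC (bS (Bgen N 1) (Bgen N ((j : ZMod N)))) (Bgen N ((k : ZMod N))) +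
      bC (bS (Bgen N ((j : ZMod N))) (Bgen N ((k : ZMod N)))) (Bgen N 1) +
      bC (bS (Bgen N ((k : ZMod N))) (Bgen N 1)) (Bgen N ((j : ZMod N))) = 0 := by
  -- integer bounds
  have hjl : 3 ≤ j := by omega
  have hkl : 5 ≤ k := by omega
  have hku : k ≤ (N : ℤ) - 1 := by omega
  have hju : j ≤ (N : ℤ) - 3 := by omega
  have hd2 : 2 ≤ k - j := by omega
  have hd2u : k - j ≤ (N : ℤ) - 4 := by omega
  -- algebraic consequences of bilinearity
  have hC0 : ∀ x : RatF N, bC 0 x = 0 := by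
    intro x
    have h := hC_add 0 0 x
    rw [add_zero] at h
    exact (left_eq_add.mp h)
  have hS0 : ∀ x : RatF N, bS 0 x = 0 := by
    intro x
    have h := hS_add 0 0 x
    rw [add_zero] at h
    exact (left_eq_add.mp h)
  have hSneg : ∀ x y : RatF N, bS (-x) y = - bS x y := by
    intro x y
    have h := hS_add x (-x) y
    rw [add_neg_cancel, hS0] at h
    exact eq_neg_of_add_eq_zero_right h.symm
  have hBne : ∀ i : ZMod N, Bgen N i ≠ 0 := Bgen_ne_zero N
  -- vanishing of S-bracket on generators at cyclic distance ≠ ±1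
  have hSB : ∀ u v : ZMod N, u + 1 ≠ v → u - 1 ≠ v → bS (Bgen N u) (Bgen N v) = 0 := by
    intro u v h1 h2
    rw [hS_gen, if_neg h1, if_neg h2]
    simp
  -- vanishing of S-bracket against the gap-2 C-bracket value
  have quot0 : ∀ (a m c : ZMod N) (x : RatF N),
      bS (Bgen N a) x = 0 → bS (Bgen N m) x = 0 → bS (Bgen N c) x = 0 →
      bS (-(Bgen N a * Bgen N c) / Bgen N m) x = 0 := by
    intro a m c x ha hm hc
    set v := -(Bgen N a * Bgen N c) / Bgen N m with hv
    have hmul : v * Bgen N m = -(Bgen N a * Bgen N c) := div_mul_cancel₀ _ (hBne m)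
    have h1 : bS (v * Bgen N m) x = v * bS (Bgen N m) x + Bgen N m * bS v x :=
      hS_leib v (Bgen N m) x
    rw [hmul, hm, mul_zero, zero_add] at h1
    have h2 : bS (-(Bgen N a * Bgen N c)) x = 0 := by
      rw [hSneg, hS_leib, ha, hc, mul_zero, mul_zero, add_zero, neg_zero]
    rw [h2] at h1
    rcases mul_eq_zero.mp h1.symm with h | h
    · exact absurd h (hBne m)
    · exact h
  -- all the needed ZMod inequalities
  -- S-brackets of B_1's neighborhood against B_k
  have s1k : bS (Bgen N 1) (Bgen N (k : ZMod N)) = 0 := by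
    refine hSB _ _ ?_ ?_
    · exact zmod_ne_of_int N 2 k _ _ (by push_cast; ring) (by push_cast; ring) (by omega)
    · exact zmod_ne_of_int N 0 k _ _ (by push_cast; ring) (by push_cast; ring) (by omega)
  have s2k : bS (Bgen N (1 + 1)) (Bgen N (k : ZMod N)) = 0 := by
    refine hSB _ _ ?_ ?_
    · exact zmod_ne_of_int N 3 k _ _ (by push_cast; ring) (by push_cast; ring) (by omega)
    · exact zmod_ne_of_int N 1 k _ _ (by push_cast; ring) (by push_cast; ring) (by omega)
  -- S-brackets of B_j's neighborhood against B_1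
  have sj1 : bS (Bgen N (j : ZMod N)) (Bgen N 1) = 0 := by
    refine hSB _ _ ?_ ?_
    · exact zmod_ne_of_int N (j + 1) 1 _ _ (by push_cast; ring) (by push_cast; ring) (by omega)
    · exact zmod_ne_of_int N (j - 1) 1 _ _ (by push_cast; ring) (by push_cast; ring) (by omega)
  have sj11 : bS (Bgen N ((j : ZMod N) + 1)) (Bgen N 1) = 0 := by
    refine hSB _ _ ?_ ?_
    · exact zmod_ne_of_int N (j + 2) 1 _ _ (by push_cast; ring) (by push_cast; ring) (by omega)
    · exact zmod_ne_of_int N j 1 _ _ (by push_cast; ring) (by push_cast; ring) (by omega)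
  have sk1 : bS (Bgen N (k : ZMod N)) (Bgen N 1) = 0 := by
    refine hSB _ _ ?_ ?_
    · exact zmod_ne_of_int N (k + 1) 1 _ _ (by push_cast; ring) (by push_cast; ring) (by omega)
    · exact zmod_ne_of_int N (k - 1) 1 _ _ (by push_cast; ring) (by push_cast; ring) (by omega)
  -- S-brackets of B_k's neighborhood against B_j
  have skj : bS (Bgen N (k : ZMod N)) (Bgen N (j : ZMod N)) = 0 := by
    refine hSB _ _ ?_ ?_
    · exact zmod_ne_of_int N (k + 1) j _ _ (by push_cast; ring) (by push_cast; ring) (by omega)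
    · exact zmod_ne_of_int N (k - 1) j _ _ (by push_cast; ring) (by push_cast; ring) (by omega)
  have sk1j : bS (Bgen N ((k : ZMod N) + 1)) (Bgen N (j : ZMod N)) = 0 := by
    refine hSB _ _ ?_ ?_
    · exact zmod_ne_of_int N (k + 2) j _ _ (by push_cast; ring) (by push_cast; ring) (by omega)
    · exact zmod_ne_of_int N k j _ _ (by push_cast; ring) (by push_cast; ring) (by omega)
  have s1j : bS (Bgen N 1) (Bgen N (j : ZMod N)) = 0 := by
    refine hSB _ _ ?_ ?_
    · exact zmod_ne_of_int N 2 j _ _ (by push_cast; ring) (by push_cast; ring) (by omega)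
    · exact zmod_ne_of_int N 0 j _ _ (by push_cast; ring) (by push_cast; ring) (by omega)
  have sjk : bS (Bgen N (j : ZMod N)) (Bgen N (k : ZMod N)) = 0 := by
    refine hSB _ _ ?_ ?_
    · exact zmod_ne_of_int N (j + 1) k _ _ (by push_cast; ring) (by push_cast; ring) (by omega)
    · exact zmod_ne_of_int N (j - 1) k _ _ (by push_cast; ring) (by push_cast; ring) (by omega)
  -- Term 1 : bS (bC B1 Bj) Bk = 0
  have T1 : bS (bC (Bgen N 1) (Bgen N (j : ZMod N))) (Bgen N (k : ZMod N)) = 0 := by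
    by_cases hd : j = 3
    · subst hd
      have h3 : ((3 : ℤ) : ZMod N) = 1 + 2 := by push_cast; ring
      have h12 : (1 + 2 : ZMod N) = (1 : ZMod N) + 1 + 1 := by ring
      rw [h3, hC_gen2 1]
      refine quot0 _ _ _ _ s1k s2k ?_
      rw [h12]
      refine hSB _ _ ?_ ?_
      · exact zmod_ne_of_int N 4 k _ _ (by push_cast; ring) (by push_cast; ring) (by omega)
      · exact zmod_ne_of_int N 2 k _ _ (by push_cast; ring) (by push_cast; ring) (by omega)
    · have hz : bC (Bgen N 1) (Bgen N (j : ZMod N)) = 0 := by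
        refine hC_gen0 _ _ ?_ ?_ ?_ ?_
        · exact zmod_ne_of_int N (j - 1) 1 _ _ (by push_cast; ring) (by push_cast; ring) (by omega)
        · exact zmod_ne_of_int N (j - 1) (-1) _ _ (by push_cast; ring) (by push_cast; ring) (by omega)
        · exact zmod_ne_of_int N (j - 1) 2 _ _ (by push_cast; ring) (by push_cast; ring) (by omega)
        · exact zmod_ne_of_int N (j - 1) (-2) _ _ (by push_cast; ring) (by push_cast; ring) (by omega)
      rw [hz, hS0]
  -- Term 2 : bS (bC Bj Bk) B1 = 0
  have T2 : bS (bC (Bgen N (j : ZMod N)) (Bgen N (k : ZMod N))) (Bgen N 1) = 0 := by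
    by_cases hd : k = j + 2
    · have hkj : (k : ZMod N) = (j : ZMod N) + 2 := by
        subst hd; push_cast; ring
      rw [hkj, hC_gen2 (j : ZMod N)]
      refine quot0 _ _ _ _ sj1 sj11 ?_
      rw [← hkj]
      exact sk1
    · have hz : bC (Bgen N (j : ZMod N)) (Bgen N (k : ZMod N)) = 0 := by
        refine hC_gen0 _ _ ?_ ?_ ?_ ?_
        · exact zmod_ne_of_int N (k - j) 1 _ _ (by push_cast; ring) (by push_cast; ring) (by omega)
        · exact zmod_ne_of_int N (k - j) (-1) _ _ (by push_cast; ring) (by push_cast; ring) (by omega)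
        · exact zmod_ne_of_int N (k - j) 2 _ _ (by push_cast; ring) (by push_cast; ring) (by omega)
        · exact zmod_ne_of_int N (k - j) (-2) _ _ (by push_cast; ring) (by push_cast; ring) (by omega)
      rw [hz, hS0]
  -- Term 3 : bS (bC Bk B1) Bj = 0
  have T3 : bS (bC (Bgen N (k : ZMod N)) (Bgen N 1)) (Bgen N (j : ZMod N)) = 0 := by
    by_cases hd : k = (N : ℤ) - 1
    · have h1k : (1 : ZMod N) = (k : ZMod N) + 2 := by
        subst hd
        push_cast [ZMod.natCast_self]
        ring
      rw [h1k, hC_gen2 (k : ZMod N)]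
      refine quot0 _ _ _ _ skj sk1j ?_
      rw [← h1k]
      exact s1j
    · have hz : bC (Bgen N (k : ZMod N)) (Bgen N 1) = 0 := by
        refine hC_gen0 _ _ ?_ ?_ ?_ ?_
        · exact zmod_ne_of_int N (1 - k) 1 _ _ (by push_cast; ring) (by push_cast; ring) (by omega)
        · exact zmod_ne_of_int N (1 - k) (-1) _ _ (by push_cast; ring) (by push_cast; ring) (by omega)
        · exact zmod_ne_of_int N (1 - k) 2 _ _ (by push_cast; ring) (by push_cast; ring) (by omega)
        · exact zmod_ne_of_int N (1 - k) (-2) _ _ (by push_cast; ring) (by push_cast; ring) (by omega)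
      rw [hz, hS0]
  rw [T1, T2, T3, s1j, sjk, sk1, hC0, hC0, hC0]
  norm_num
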